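/- Suppose ω : [0,∞) → [0,1] is continuously differentiable, ρ* > 0, and snr satisfies snr = ρ*/(1 − β·ρ*·ω(ρ*)) with 1 − β·ρ·ω(ρ) > 0 for all ρ in [0, ρ*]. Then ∫₀^{snr} (ρ(s)·ω(ρ(s))/s) ds, computed by substituting s = ρ/(1 − β·ρ·ω(ρ)), equals β⁻¹[ρ*/snr − log(ρ*/snr) − 1] + ∫₀^{ρ*} ω(ρ) dρ. -/

import Mathlib

/-- Change of variables in the constrained capacity integral.
With `ω : [0,∞) → [0,1]` C¹, `ρ* > 0`, `snr = ρ*/(1 − β ρ* ω(ρ*))`,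
`1 − β ρ ω(ρ) > 0` on `[0, ρ*]`, and `ρ(s)` the fixed point
`ρ(s) = 1/(s⁻¹ + β ω(ρ(s)))` (smooth, monotone, `ρ(snr) = ρ*`), one has
`∫₀^{snr} ρ(s) ω(ρ(s))/s ds = β⁻¹[ρ*/snr − log(ρ*/snr) − 1] + ∫₀^{ρ*} ω`. -/
theorem stmt3 (β snr ρstar : ℝ) (ω ρfun : ℝ → ℝ)
    (hβ : 0 < β) (hρstar : 0 < ρstar) (hsnrpos : 0 < snr)
    (hω : ContDiff ℝ 1 ω)
    (hω01 : ∀ x : ℝ, 0 ≤ x → ω x ∈ Set.Icc (0 : ℝ) 1)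
    (hsnr : snr = ρstar / (1 - β * ρstar * ω ρstar))
    (hpos : ∀ ρ ∈ Set.Icc (0 : ℝ) ρstar, 0 < 1 - β * ρ * ω ρ)
    (hfix : ∀ s ∈ Set.Ioc (0 : ℝ) snr, ρfun s = 1 / (s⁻¹ + β * ω (ρfun s)))
    (hρsnr : ρfun snr = ρstar)
    (hmono : StrictMonoOn ρfun (Set.Ioc (0 : ℝ) snr))
    (hsmooth : ContinuousOn ρfun (Set.Icc (0 : ℝ) snr))
    (hmaps : ∀ s ∈ Set.Ioc (0 : ℝ) snr, ρfun s ∈ Set.Ioc (0 : ℝ) ρstar) :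
    ∫ s in (0 : ℝ)..snr, ρfun s * ω (ρfun s) / s
      = β⁻¹ * (ρstar / snr - Real.log (ρstar / snr) - 1)
        + ∫ ρ in (0 : ℝ)..ρstar, ω ρ := by
  have hωc : Continuous ω := hω.continuous
  have hωd : Differentiable ℝ ω := hω.differentiable one_ne_zero
  have hω'c : Continuous (deriv ω) := hω.continuous_deriv le_rfl
  have hβne : β ≠ 0 := hβ.ne'
  set ω' : ℝ → ℝ := deriv ω with hω'def
  set D : ℝ → ℝ := fun ρ => 1 - β * ρ * ω ρ with hDdef
  set h : ℝ → ℝ := fun ρ => ρ / D ρ with hhdef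
  set h' : ℝ → ℝ := fun ρ => (1 + β * ρ ^ 2 * ω' ρ) / (D ρ) ^ 2 with hh'def
  set g : ℝ → ℝ := fun s => ω (ρfun s) * D (ρfun s) with hgdef
  have hDcont : Continuous D := by fun_prop
  have hDpos : ∀ ρ ∈ Set.Icc (0 : ℝ) ρstar, 0 < D ρ := hpos
  -- key fixed point relation
  have key : ∀ s ∈ Set.Ioc (0 : ℝ) snr, ρfun s = s * D (ρfun s) := by
    intro s hs
    have hs0 : 0 < s := hs.1
    have hsne : s ≠ 0 := hs0.ne'
    have hρ := hmaps s hs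
    have hωnn : 0 ≤ ω (ρfun s) := (hω01 _ hρ.1.le).1
    have hden : 0 < s⁻¹ + β * ω (ρfun s) := by
      have h1 : (0:ℝ) < s⁻¹ := inv_pos.mpr hs0
      nlinarith
    have h1 : ρfun s = 1 / (s⁻¹ + β * ω (ρfun s)) := hfix s hs
    have h2 : ρfun s * (s⁻¹ + β * ω (ρfun s)) = 1 := by
      nth_rewrite 1 [h1]
      exact one_div_mul_cancel hden.ne'
    have hss : s⁻¹ * s = 1 := inv_mul_cancel₀ hsne
    show ρfun s = s * (1 - β * ρfun s * ω (ρfun s))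
    linear_combination s * h2 - ρfun s * hss
  -- h inverts ρfun
  have hinv : ∀ s ∈ Set.Ioc (0 : ℝ) snr, h (ρfun s) = s := by
    intro s hs
    have hρ := hmaps s hs
    have hDne : D (ρfun s) ≠ 0 := (hDpos _ ⟨hρ.1.le, hρ.2⟩).ne'
    show ρfun s / D (ρfun s) = s
    rw [div_eq_iff hDne]
    exact key s hs
  -- ρfun s ≤ s
  have hle : ∀ s ∈ Set.Ioc (0 : ℝ) snr, ρfun s ≤ s := by
    intro s hs
    have hρ := hmaps s hs
    have hωnn : 0 ≤ ω (ρfun s) := (hω01 _ hρ.1.le).1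
    have hnn : 0 ≤ β * ρfun s * ω (ρfun s) :=
      mul_nonneg (mul_nonneg hβ.le hρ.1.le) hωnn
    have hD1 : D (ρfun s) ≤ 1 := by
      show 1 - β * ρfun s * ω (ρfun s) ≤ 1
      linarith
    calc ρfun s = s * D (ρfun s) := key s hs
      _ ≤ s * 1 := mul_le_mul_of_nonneg_left hD1 hs.1.le
      _ = s := mul_one s
  -- surjectivity of ρfun onto (0, ρstar]
  have hsurj : ∀ ρ ∈ Set.Ioc (0 : ℝ) ρstar, ∃ s ∈ Set.Ioc (0 : ℝ) snr, ρfun s = ρ := by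
    intro ρ hρ
    set s₀ : ℝ := min (ρ / 2) snr with hs₀def
    have hs₀pos : 0 < s₀ := lt_min (by linarith [hρ.1]) hsnrpos
    have hs₀le : s₀ ≤ snr := min_le_right _ _
    have hs₀Ioc : s₀ ∈ Set.Ioc (0:ℝ) snr := ⟨hs₀pos, hs₀le⟩
    have h1 : ρfun s₀ ≤ ρ / 2 := (hle s₀ hs₀Ioc).trans (min_le_left _ _)
    have h2 : ρfun s₀ ≤ ρ := by linarith [hρ.1]
    have hcont : ContinuousOn ρfun (Set.Icc s₀ snr) :=
      hsmooth.mono (Set.Icc_subset_Icc hs₀pos.le le_rfl)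
    have hIVT := intermediate_value_Icc hs₀le hcont
    have hmem : ρ ∈ Set.Icc (ρfun s₀) (ρfun snr) := by
      rw [hρsnr]; exact ⟨h2, hρ.2⟩
    obtain ⟨s, hsmem, hseq⟩ := hIVT hmem
    exact ⟨s, ⟨lt_of_lt_of_le hs₀pos hsmem.1, hsmem.2⟩, hseq⟩
  -- h maps (0,ρstar] into (0,snr] and is a left inverse there
  have hcomp : ∀ ρ ∈ Set.Ioc (0 : ℝ) ρstar, h ρ ∈ Set.Ioc (0:ℝ) snr ∧ ρfun (h ρ) = ρ := by
    intro ρ hρ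
    obtain ⟨s, hs, hseq⟩ := hsurj ρ hρ
    have hhs : h ρ = s := by rw [← hseq]; exact hinv s hs
    rw [hhs, hseq]
    exact ⟨hs, rfl⟩
  have huIcc : Set.uIcc (0:ℝ) ρstar = Set.Icc 0 ρstar := Set.uIcc_of_le hρstar.le
  have hh0 : h 0 = 0 := by
    show (0:ℝ) / D 0 = 0
    exact zero_div _
  have hρsnrne : (1 : ℝ) - β * ρstar * ω ρstar ≠ 0 := (hpos ρstar ⟨hρstar.le, le_rfl⟩).ne'
  have hDρstar : D ρstar = ρstar / snr := by
    show 1 - β * ρstar * ω ρstar = ρstar / snr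
    rw [hsnr]
    field_simp
  have hhρstar : h ρstar = snr := by
    show ρstar / D ρstar = snr
    rw [hsnr]
  -- image of h
  have himg : h '' Set.uIcc (0:ℝ) ρstar ⊆ Set.Icc 0 snr := by
    rw [huIcc]
    rintro _ ⟨ρ, hρ, rfl⟩
    rcases eq_or_lt_of_le hρ.1 with heq | hlt
    · rw [← heq, hh0]; exact ⟨le_rfl, hsnrpos.le⟩
    · exact Set.Ioc_subset_Icc_self ((hcomp ρ ⟨hlt, hρ.2⟩).1)
  -- derivative of h
  have hderiv : ∀ ρ ∈ Set.uIcc (0:ℝ) ρstar, HasDerivAt h (h' ρ) ρ := by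
    intro ρ hρ
    rw [huIcc] at hρ
    have hDne : D ρ ≠ 0 := (hDpos ρ hρ).ne'
    have hd1 : HasDerivAt (fun x => x * ω x) (ω ρ + ρ * ω' ρ) ρ := by
      simpa using (hasDerivAt_id' ρ).fun_mul (hωd ρ).hasDerivAt
    have hdD : HasDerivAt D (-(β * (ω ρ + ρ * ω' ρ))) ρ := by
      have := (hd1.const_mul β).const_sub 1
      simpa [hDdef, mul_assoc] using this
    have H : HasDerivAt (fun x => x / D x)
        ((1 * D ρ - ρ * (-(β * (ω ρ + ρ * ω' ρ)))) / D ρ ^ 2) ρ :=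
      HasDerivAt.div (hasDerivAt_id ρ) hdD hDne
    have heq : h' ρ = (1 * D ρ - ρ * (-(β * (ω ρ + ρ * ω' ρ)))) / D ρ ^ 2 := by
      show (1 + β * ρ ^ 2 * ω' ρ) / (D ρ) ^ 2 = _
      show (1 + β * ρ ^ 2 * ω' ρ) / (1 - β * ρ * ω ρ) ^ 2
        = (1 * (1 - β * ρ * ω ρ) - ρ * (-(β * (ω ρ + ρ * ω' ρ)))) / (1 - β * ρ * ω ρ) ^ 2
      ring
    rw [heq]
    exact H
  have hh'cont : ContinuousOn h' (Set.uIcc (0:ℝ) ρstar) := by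
    rw [huIcc]
    apply ContinuousOn.div
    · fun_prop
    · fun_prop
    · intro ρ hρ
      exact pow_ne_zero 2 (hDpos ρ hρ).ne'
  have hgcont : ContinuousOn g (h '' Set.uIcc (0:ℝ) ρstar) := by
    apply ContinuousOn.mono _ himg
    exact (hωc.comp_continuousOn hsmooth).mul (hDcont.comp_continuousOn hsmooth)
  -- Step 1: rewrite integrand on (0, snr]
  have step1 : (∫ s in (0:ℝ)..snr, ρfun s * ω (ρfun s) / s) = ∫ s in (0:ℝ)..snr, g s := by
    apply intervalIntegral.integral_congr_ae
    apply MeasureTheory.ae_of_all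
    intro s hs
    rw [Set.uIoc_of_le hsnrpos.le] at hs
    have hsne : s ≠ 0 := hs.1.ne'
    have hdiv : ρfun s / s = D (ρfun s) := by
      rw [div_eq_iff hsne]
      exact (key s hs).trans (mul_comm _ _)
    calc ρfun s * ω (ρfun s) / s = (ρfun s / s) * ω (ρfun s) := by ring
      _ = D (ρfun s) * ω (ρfun s) := by rw [hdiv]
      _ = g s := by show _ = ω (ρfun s) * D (ρfun s); ring
  -- Step 2: change of variables
  have step2 : (∫ s in (0:ℝ)..snr, g s) = ∫ ρ in (0:ℝ)..ρstar, h' ρ • (g ∘ h) ρ := by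
    rw [intervalIntegral.integral_comp_smul_deriv' hderiv hh'cont hgcont, hh0, hhρstar]
  -- Step 3: simplify the transformed integrand a.e.
  have step3 : (∫ ρ in (0:ℝ)..ρstar, h' ρ • (g ∘ h) ρ)
      = ∫ ρ in (0:ℝ)..ρstar, ω ρ * (1 + β * ρ ^ 2 * ω' ρ) / D ρ := by
    apply intervalIntegral.integral_congr_ae
    apply MeasureTheory.ae_of_all
    intro ρ hρ
    rw [Set.uIoc_of_le hρstar.le] at hρ
    have hDne : D ρ ≠ 0 := (hDpos ρ (Set.Ioc_subset_Icc_self hρ)).ne'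
    have hc := (hcomp ρ hρ).2
    show h' ρ * g (h ρ) = _
    have hgh : g (h ρ) = ω ρ * D ρ := by
      show ω (ρfun (h ρ)) * D (ρfun (h ρ)) = _
      rw [hc]
    rw [hgh]
    show (1 + β * ρ ^ 2 * ω' ρ) / (D ρ) ^ 2 * (ω ρ * D ρ) = ω ρ * (1 + β * ρ ^ 2 * ω' ρ) / D ρ
    field_simp
  -- Step 4: FTC
  set G : ℝ → ℝ := fun ρ => -(ρ * ω ρ) - β⁻¹ * Real.log (D ρ) + ∫ t in (0:ℝ)..ρ, ω t
    with hGdef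
  have step4 : (∫ ρ in (0:ℝ)..ρstar, ω ρ * (1 + β * ρ ^ 2 * ω' ρ) / D ρ)
      = G ρstar - G 0 := by
    apply intervalIntegral.integral_eq_sub_of_hasDerivAt
    · intro ρ hρ
      rw [huIcc] at hρ
      have hDp : 0 < D ρ := hDpos ρ hρ
      have hDne : D ρ ≠ 0 := hDp.ne'
      have hd1 : HasDerivAt (fun x => x * ω x) (ω ρ + ρ * ω' ρ) ρ := by
        simpa using (hasDerivAt_id' ρ).fun_mul (hωd ρ).hasDerivAt
      have hdD : HasDerivAt D (-(β * (ω ρ + ρ * ω' ρ))) ρ := by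
        have := (hd1.const_mul β).const_sub 1
        simpa [hDdef, mul_assoc] using this
      have hdlog : HasDerivAt (fun x => β⁻¹ * Real.log (D x))
          (β⁻¹ * (-(β * (ω ρ + ρ * ω' ρ)) / D ρ)) ρ :=
        (hdD.log hDne).const_mul β⁻¹
      have hdint : HasDerivAt (fun x => ∫ t in (0:ℝ)..x, ω t) (ω ρ) ρ :=
        intervalIntegral.integral_hasDerivAt_right (hωc.intervalIntegrable 0 ρ)
          (hωc.stronglyMeasurableAtFilter _ _) hωc.continuousAt
      have H := (hd1.neg.sub hdlog).add hdint
      have heq : ω ρ * (1 + β * ρ ^ 2 * ω' ρ) / D ρ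
          = -(ω ρ + ρ * ω' ρ) - β⁻¹ * (-(β * (ω ρ + ρ * ω' ρ)) / D ρ) + ω ρ := by
        show ω ρ * (1 + β * ρ ^ 2 * ω' ρ) / (1 - β * ρ * ω ρ)
          = -(ω ρ + ρ * ω' ρ) - β⁻¹ * (-(β * (ω ρ + ρ * ω' ρ)) / (1 - β * ρ * ω ρ)) + ω ρ
        have hDne' : (1 : ℝ) - β * ρ * ω ρ ≠ 0 := hDne
        linear_combination (-(1 - β * ρ * ω ρ)⁻¹ * (ω ρ + ρ * ω' ρ)) * mul_inv_cancel₀ hβne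
          - ρ * ω' ρ * mul_inv_cancel₀ hDne'
      rw [heq]
      exact H
    · apply ContinuousOn.intervalIntegrable
      rw [huIcc]
      apply ContinuousOn.div
      · fun_prop
      · fun_prop
      · intro ρ hρ
        exact (hDpos ρ hρ).ne'
  -- Step 5: final algebra
  rw [step1, step2, step3, step4]
  have hG0 : G 0 = 0 := by
    show -(0 * ω 0) - β⁻¹ * Real.log (D 0) + (∫ t in (0:ℝ)..(0:ℝ), ω t) = 0
    have hD0 : D 0 = 1 := by
      show 1 - β * 0 * ω 0 = 1; ring
    rw [hD0]
    simp
  rw [hG0, sub_zero]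
  show -(ρstar * ω ρstar) - β⁻¹ * Real.log (D ρstar) + (∫ t in (0:ℝ)..ρstar, ω t) = _
  have hq : ρstar / snr = 1 - β * ρstar * ω ρstar := hDρstar.symm
  rw [hq, hDρstar, hq]
  field_simp
  ring
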